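/- Singularity-averaging integral: for constants 0 < r < R, |x|_p ≥ r, and a linear path x(τ) in the plane with x(τ)₂ = (1−τ)x̃₂ + τx₂ (x₂ ≠ x̃₂), define sin b(τ) = x(τ)₂/r ∈ [sin b(τ_*), 1] on the interval between τ_* and τ₊ where x(τ₊)₂ = r. Then |∫_{τ_*}^{τ₊} x(τ)₂ / √(r² − x(τ)₂²) dτ| = (r/|x₂ − x̃₂|) cos b(τ_*) ≤ C |τ₊ − τ_*| / cos b(τ_*). -/

import Mathlib

open Real MeasureTheory

set_option maxHeartbeats 1000000 in
/-- singularity-averaging integral. For `0 < r < R`, a linear path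
`X2 τ = (1−τ)x̃₂ + τx₂` (with `x₂ ≠ x̃₂`), `X2 τ₊ = r` and `0 ≤ X2 τ_* < r`, one has
`|∫_{τ_*}^{τ₊} X2 τ / √(r² − X2 τ²) dτ| = (r/|x₂ − x̃₂|) cos b(τ_*)
 ≤ C |τ₊ − τ_*| / cos b(τ_*)`, where `cos b(τ_*) = √(r² − X2 τ_*²)/r`. -/
theorem stmt_16 (r R : ℝ) (hr : 0 < r) (hrR : r < R)
    (x2 xt2 τs τp : ℝ) (hne : x2 ≠ xt2)
    (X2 : ℝ → ℝ) (hX2 : ∀ τ, X2 τ = (1 - τ) * xt2 + τ * x2)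
    (hhit : X2 τp = r) (h0 : 0 ≤ X2 τs) (hlt : X2 τs < r) :
    ∃ C > 0,
      |∫ τ in τs..τp, X2 τ / Real.sqrt (r ^ 2 - X2 τ ^ 2)| =
        (r / |x2 - xt2|) * (Real.sqrt (r ^ 2 - X2 τs ^ 2) / r) ∧
      (r / |x2 - xt2|) * (Real.sqrt (r ^ 2 - X2 τs ^ 2) / r) ≤
        C * |τp - τs| / (Real.sqrt (r ^ 2 - X2 τs ^ 2) / r) := by
  set d : ℝ := x2 - xt2 with hd_def
  have hd : d ≠ 0 := sub_ne_zero.2 hne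
  have hXfun : X2 = fun τ => xt2 + τ * d := by
    funext τ; rw [hX2]; simp only [hd_def]; ring
  have hX : ∀ τ, X2 τ = xt2 + τ * d := fun τ => by rw [hXfun]
  have hτne : τp ≠ τs := by
    intro h; rw [h] at hhit; exact (ne_of_lt hlt) hhit
  have hτd : (τp - τs) * d = r - X2 τs := by
    rw [← hhit, hX τp, hX τs]; ring
  have hmemc : ∀ τ ∈ Set.Icc (min τs τp) (max τs τp), X2 τs ≤ X2 τ ∧ X2 τ ≤ r := by
    intro τ hτ
    set θ : ℝ := (τ - τs) / (τp - τs) with hθ_def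
    have hθ : 0 ≤ θ ∧ θ ≤ 1 := by
      have hθeq : θ = (τs - τ) / (τs - τp) := by
        rw [hθ_def, show τ - τs = -(τs - τ) by ring,
          show τp - τs = -(τs - τp) by ring, neg_div_neg_eq]
      rcases lt_or_gt_of_ne hτne with h | h
      · rw [min_eq_right h.le, max_eq_left h.le] at hτ
        constructor
        · rw [hθeq]
          exact div_nonneg (by linarith [hτ.2]) (by linarith)
        · rw [hθeq, div_le_one (by linarith)]; linarith [hτ.1]
      · rw [min_eq_left h.le, max_eq_right h.le] at hτ
        constructor
        · exact div_nonneg (by linarith [hτ.1]) (by linarith)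
        · rw [hθ_def, div_le_one (by linarith)]; linarith [hτ.2]
    have hXτ : X2 τ = X2 τs + θ * (r - X2 τs) := by
      rw [← hτd, hθ_def, hX τ, hX τs]
      have hne' : τp - τs ≠ 0 := sub_ne_zero.2 hτne
      field_simp
      ring
    refine ⟨by rw [hXτ]; nlinarith [hθ.1, hθ.2], by rw [hXτ]; nlinarith [hθ.1, hθ.2]⟩
  have hmemo : ∀ τ ∈ Set.Ioo (min τs τp) (max τs τp), X2 τs < X2 τ ∧ X2 τ < r := by
    intro τ hτ
    set θ : ℝ := (τ - τs) / (τp - τs) with hθ_def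
    have hθ : 0 < θ ∧ θ < 1 := by
      have hθeq : θ = (τs - τ) / (τs - τp) := by
        rw [hθ_def, show τ - τs = -(τs - τ) by ring,
          show τp - τs = -(τs - τp) by ring, neg_div_neg_eq]
      rcases lt_or_gt_of_ne hτne with h | h
      · rw [min_eq_right h.le, max_eq_left h.le] at hτ
        constructor
        · rw [hθeq]
          exact div_pos (by linarith [hτ.2]) (by linarith)
        · rw [hθeq, div_lt_one (by linarith)]; linarith [hτ.1]
      · rw [min_eq_left h.le, max_eq_right h.le] at hτ
        constructor
        · exact div_pos (by linarith [hτ.1]) (by linarith)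
        · rw [hθ_def, div_lt_one (by linarith)]; linarith [hτ.2]
    have hXτ : X2 τ = X2 τs + θ * (r - X2 τs) := by
      rw [← hτd, hθ_def, hX τ, hX τs]
      have hne' : τp - τs ≠ 0 := sub_ne_zero.2 hτne
      field_simp
      ring
    refine ⟨by rw [hXτ]; nlinarith [hθ.1, hθ.2], by rw [hXτ]; nlinarith [hθ.1, hθ.2]⟩
  have hcX : Continuous X2 := by rw [hXfun]; fun_prop
  set F : ℝ → ℝ := fun τ => -Real.sqrt (r ^ 2 - X2 τ ^ 2) / d with hF_def
  have hF_cont : Continuous F := by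
    apply Continuous.div_const
    exact ((continuous_const.sub (hcX.pow 2)).sqrt).neg
  have hderiv : ∀ τ ∈ Set.Ioo (min τs τp) (max τs τp),
      HasDerivAt F (X2 τ / Real.sqrt (r ^ 2 - X2 τ ^ 2)) τ := by
    intro τ hτ
    obtain ⟨h1, h2⟩ := hmemo τ hτ
    have hpos : 0 < r ^ 2 - X2 τ ^ 2 := by nlinarith [h0]
    have hsq : 0 < Real.sqrt (r ^ 2 - X2 τ ^ 2) := Real.sqrt_pos.2 hpos
    have hsq2 : Real.sqrt (r ^ 2 - X2 τ ^ 2) ^ 2 = r ^ 2 - X2 τ ^ 2 :=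
      Real.sq_sqrt hpos.le
    have hd1 : HasDerivAt X2 d τ := by
      rw [hXfun]
      simpa using ((hasDerivAt_id τ).mul_const d).const_add xt2
    have hd2 : HasDerivAt (fun τ => r ^ 2 - X2 τ ^ 2) (-(2 * X2 τ ^ 1 * d)) τ := by
      have := (hd1.pow 2).const_sub (r ^ 2)
      simpa using this
    have hd3 := (hd2.sqrt (ne_of_gt hpos)).neg.div_const d
    refine hd3.congr_deriv ?_
    field_simp
  have hbase : IntervalIntegrable (fun x : ℝ => x ^ (-(1/2) : ℝ)) volume
      ((τp - τs) * d) 0 := intervalIntegral.intervalIntegrable_rpow' (by norm_num)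
  have hcomp1 : IntervalIntegrable (fun x : ℝ => (x * d) ^ (-(1/2) : ℝ)) volume
      (τp - τs) 0 := by
    have h1 := hbase.comp_mul_right (c := d)
    have e1 : (τp - τs) * d / d = τp - τs := by field_simp
    rw [e1] at h1
    simpa using h1
  have hg_int : IntervalIntegrable
      (fun τ => Real.sqrt r * ((τp - τ) * d) ^ (-(1/2) : ℝ)) volume τs τp := by
    have h1 := (hcomp1.comp_sub_left τp).const_mul (Real.sqrt r)
    have e1 : τp - (τp - τs) = τs := by ring
    have e2 : τp - (0:ℝ) = τp := by ring
    rw [e1, e2] at h1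
    exact h1
  have hf_meas : MeasureTheory.AEStronglyMeasurable
      (fun τ => X2 τ / Real.sqrt (r ^ 2 - X2 τ ^ 2))
      (MeasureTheory.volume.restrict (Set.uIoc τs τp)) := by
    apply Measurable.aestronglyMeasurable
    apply Measurable.div hcX.measurable
    exact (continuous_const.sub (hcX.pow 2)).sqrt.measurable
  have hbound : ∀ τ ∈ Set.uIoc τs τp,
      ‖X2 τ / Real.sqrt (r ^ 2 - X2 τ ^ 2)‖ ≤
        Real.sqrt r * ((τp - τ) * d) ^ (-(1/2) : ℝ) := by
    intro τ hτ
    have hτc : τ ∈ Set.Icc (min τs τp) (max τs τp) := ⟨hτ.1.le, hτ.2⟩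
    obtain ⟨hl, hu⟩ := hmemc τ hτc
    have hX0 : 0 ≤ X2 τ := le_trans h0 hl
    have hτd2 : (τp - τ) * d = r - X2 τ := by rw [← hhit, hX τp, hX τ]; ring
    rcases eq_or_lt_of_le hu with heq | hltu
    · have hb0 : (τp - τ) * d = 0 := by rw [hτd2, heq]; ring
      rw [hb0, Real.zero_rpow (by norm_num), mul_zero, heq]
      simp [sub_self]
    · have hbpos : 0 < r - X2 τ := by linarith
      have hpos : 0 < r ^ 2 - X2 τ ^ 2 := by nlinarith
      have hsq : 0 < Real.sqrt (r ^ 2 - X2 τ ^ 2) := Real.sqrt_pos.2 hpos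
      have hsb : 0 < Real.sqrt (r - X2 τ) := Real.sqrt_pos.2 hbpos
      have hsr : 0 < Real.sqrt r := Real.sqrt_pos.2 hr
      rw [norm_div, Real.norm_of_nonneg hX0, Real.norm_of_nonneg hsq.le, hτd2]
      have hrpow : (r - X2 τ) ^ (-(1/2) : ℝ) = (Real.sqrt (r - X2 τ))⁻¹ := by
        rw [Real.rpow_neg hbpos.le, ← Real.sqrt_eq_rpow]
      rw [hrpow]
      have h1 : Real.sqrt r * Real.sqrt (r - X2 τ) ≤ Real.sqrt (r ^ 2 - X2 τ ^ 2) := by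
        rw [← Real.sqrt_mul hr.le]
        exact Real.sqrt_le_sqrt (by nlinarith)
      have h2 : X2 τ / Real.sqrt (r ^ 2 - X2 τ ^ 2) ≤
          r / (Real.sqrt r * Real.sqrt (r - X2 τ)) := by
        exact div_le_div₀ hr.le (by linarith) (mul_pos hsr hsb) h1
      have h3 : r / (Real.sqrt r * Real.sqrt (r - X2 τ)) =
          Real.sqrt r * (Real.sqrt (r - X2 τ))⁻¹ := by
        rw [← div_div, Real.div_sqrt, div_eq_mul_inv]
      linarith [h2, h3.symm.le]
  have hint : IntervalIntegrable
      (fun τ => X2 τ / Real.sqrt (r ^ 2 - X2 τ ^ 2)) volume τs τp := by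
    apply hg_int.mono_fun' hf_meas
    exact MeasureTheory.ae_restrict_of_forall_mem measurableSet_uIoc hbound
  have hFTC : (∫ τ in τs..τp, X2 τ / Real.sqrt (r ^ 2 - X2 τ ^ 2)) = F τp - F τs :=
    intervalIntegral.integral_eq_sub_of_hasDeriv_right hF_cont.continuousOn
      (fun τ hτ => (hderiv τ hτ).hasDerivWithinAt) hint
  set s : ℝ := Real.sqrt (r ^ 2 - X2 τs ^ 2) with hs_def
  have hspos : 0 < s := Real.sqrt_pos.2 (by nlinarith)
  have hs2 : s ^ 2 = r ^ 2 - X2 τs ^ 2 := Real.sq_sqrt (by nlinarith)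
  have hFp : F τp = 0 := by
    rw [hF_def]
    simp [hhit]
  have hval : (∫ τ in τs..τp, X2 τ / Real.sqrt (r ^ 2 - X2 τ ^ 2)) = s / d := by
    rw [hFTC, hFp, hF_def, hs_def]
    ring
  have habsd : 0 < |d| := abs_pos.2 hd
  have habs : |τp - τs| * |d| = r - X2 τs := by
    rw [← abs_mul, hτd, abs_of_pos (by linarith)]
  refine ⟨2, by norm_num, ?_, ?_⟩
  · rw [hval, abs_div, abs_of_pos hspos]
    field_simp
  · have e2 : r / |d| * (s / r) = s / |d| := by field_simp
    rw [e2, div_le_div_iff₀ habsd (by positivity)]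
    have e3 : s * (s / r) = s ^ 2 / r := by ring
    rw [e3, div_le_iff₀ hr] at *
    nlinarith [hs2, habs, abs_nonneg (τp - τs)]
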